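/- Let a < b < c < d < e be real numbers and let z be the unique point of the open upper half-plane lying on both the circle with diameter [a,d] and the circle with diameter [b,e]. Then Re z = c if and only if (b-a)*(d-c) = (c-b)*(e-d). -/

import Mathlib

/-- `z` lies on the circle in the plane with diameter the segment `[p, q]` of the real
axis, i.e. the circle with center `(p+q)/2` and radius `(q-p)/2`. -/
def onDiamCircle (p q : ℝ) (z : ℂ) : Prop :=
  ‖z - (((p + q) / 2 : ℝ) : ℂ)‖ = (q - p) / 2

lemma diam_sq {p q : ℝ} {z : ℂ} (h : onDiamCircle p q z) :
    (z.re - (p + q) / 2) ^ 2 + z.im ^ 2 = ((q - p) / 2) ^ 2 := by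
  unfold onDiamCircle at h
  have h2 := congrArg (· ^ 2) h
  simp only [Complex.sq_norm, Complex.normSq_apply, Complex.sub_re, Complex.sub_im,
    Complex.ofReal_re, Complex.ofReal_im] at h2
  ring_nf at h2 ⊢
  linarith

/-- **Similar-triangles step of Lemma 3.**
Let `a < b < c < d < e` be real numbers, and let `z` be the (unique) point of the open
upper half-plane lying on both the circle with diameter `[a,d]` and the circle with
diameter `[b,e]`.  Then `Re z = c` if and only if
`(b-a)*(d-c) = (c-b)*(e-d)`. -/
theorem crossing_above_c_iff (a b c d e : ℝ)
    (hab : a < b) (hbc : b < c) (hcd : c < d) (hde : d < e)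
    (z : ℂ) (hz : 0 < z.im)
    (h1 : onDiamCircle a d z) (h2 : onDiamCircle b e z) :
    z.re = c ↔ (b - a) * (d - c) = (c - b) * (e - d) := by
  have e1 := diam_sq h1
  have e2 := diam_sq h2
  have key : (b + e - a - d) * z.re = b * e - a * d := by linear_combination e1 - e2
  have hk : (0 : ℝ) < b + e - a - d := by linarith
  constructor
  · intro h
    rw [h] at key
    linear_combination -key
  · intro h
    have h' : (b + e - a - d) * z.re = (b + e - a - d) * c := by linear_combination key + h
    exact mul_left_cancel₀ (ne_of_gt hk) h'
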